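/- Consider a path of n+1 vertices with a single leak at interior vertex λ, where the head loss on each edge past the leak uses a strictly smaller friction term than the corresponding no-leak prediction. Formally: if H_j^* = H_i - l_{ij} U_{ij}^* - M_{ij}^* and H_j = H_i' - l_{ij} U_{ij} - M_{ij} with H_i' ≥ H_i^* (with strict inequality at the leak edge or U_{ij}^* > U_{ij} there), and downstream of the leak U_{ij} ≤ U_{ij}^* and M_{ij} ≤ M_{ij}^*, then by induction along the path the true pressure strictly exceeds the apparent pressure at every vertex strictly past the leak: H_j > H_j^*. -/
import Mathlib


/-- Along a path with a single leak at interior vertex `lam`, the true pressure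
strictly exceeds the apparent (no-leak) pressure at every vertex strictly past the
leak. -/
theorem stmt_19 (n lam : ℕ) (hlam : lam < n)
    (H Hstar l U Ustar M Mstar : ℕ → ℝ)
    (hstar_rec : ∀ j, Hstar (j + 1) = Hstar j - l j * Ustar j - Mstar j)
    (h_rec : ∀ j, H (j + 1) = H j - l j * U j - M j)
    (hinit : Hstar lam ≤ H lam)
    (hl : ∀ j, lam ≤ j → j < n → 0 ≤ l j)
    (hU : ∀ j, lam ≤ j → j < n → U j ≤ Ustar j)
    (hM : ∀ j, lam ≤ j → j < n → M j ≤ Mstar j)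
    (hleak : U lam < Ustar lam) (hllam : 0 < l lam) :
    ∀ j, lam < j → j ≤ n → Hstar j < H j := by
  intro j
  induction j with
  | zero => intro h; omega
  | succ k ih =>
    intro h1 h2
    rw [hstar_rec, h_rec]
    rcases Nat.lt_or_ge lam k with hk | hk
    · have hkn : k < n := by omega
      have := ih hk (by omega)
      have hUk := hU k (by omega) hkn
      have hMk := hM k (by omega) hkn
      have hlk := hl k (by omega) hkn
      nlinarith [mul_le_mul_of_nonneg_left hUk hlk]
    · have hk' : lam = k := by omega
      subst hk'
      have hMk := hM lam le_rfl hlam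
      nlinarith
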